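/- Under the true-proportional-navigation engagement kinematics (r' = V_T cos(γ_T − θ) − V_P cos δ, r·θ' = V_T sin(γ_T − θ) − V_P sin δ, γ_P' = a cos δ / V_P, V_P' = a sin δ, δ = γ_P − θ, constants V_T, γ_T, c), let s : ℝ → ℝ be any function, let α, β ∈ ℝ, let t_e > 0 and let h be the scaling function associated with t_e. If on an interval I ⊆ (0, t_e) one has r > 0, V_P ≠ 0, V_θ ≠ 0, V_r + 2c ≠ 0, Q = V_θ² + V_r² + 2c·V_r ≠ 0, and the command a(t) = c·θ'(t) + [Q(t)²/(2·(V_r(t) + 2c)·V_θ(t)·r(t))]·(α − β·h'(t)/h(t))·s(t) is applied, then t_go = −r·(V_r + 2c)/Q satisfies t_go'(t) = −1 + (−α + β·h'(t)/h(t))·s(t) for all t ∈ I. -/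

import Mathlib

/-- The prescribed-time scaling function associated with `te`:
`h(t) = (te/π)·sin(πt/te) + t − te` for `t < te` and `h(t) = 1` for `t ≥ te`. -/
noncomputable def scalingFn (te t : ℝ) : ℝ :=
  if t < te then (te / Real.pi) * Real.sin (Real.pi * t / te) + t - te else 1

/-- Deviation angle `δ = γ_P − θ`. -/
noncomputable def devAngle (θ γP : ℝ → ℝ) (t : ℝ) : ℝ := γP t - θ t

/-- Relative velocity component along the line of sight (time-varying pursuer speed). -/
noncomputable def VradT (VT γT : ℝ) (θ γP VP : ℝ → ℝ) (t : ℝ) : ℝ :=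
  VT * Real.cos (γT - θ t) - VP t * Real.cos (devAngle θ γP t)

/-- Relative velocity component across the line of sight (time-varying pursuer speed). -/
noncomputable def VlosT (VT γT : ℝ) (θ γP VP : ℝ → ℝ) (t : ℝ) : ℝ :=
  VT * Real.sin (γT - θ t) - VP t * Real.sin (devAngle θ γP t)

/-- `Q = V_θ² + V_r² + 2c·V_r`. -/
noncomputable def Qtpn (VT γT c : ℝ) (θ γP VP : ℝ → ℝ) (t : ℝ) : ℝ :=
  VlosT VT γT θ γP VP t ^ 2 + VradT VT γT θ γP VP t ^ 2 + 2 * c * VradT VT γT θ γP VP t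

/-- True-proportional-navigation time-to-go `t_go = −r (V_r + 2c)/Q`. -/
noncomputable def tgoTPN (VT γT c : ℝ) (r θ γP VP : ℝ → ℝ) (t : ℝ) : ℝ :=
  -(r t * (VradT VT γT θ γP VP t + 2 * c)) / Qtpn VT γT c θ γP VP t

/-- Corollary 2 of the paper: under the proposed
true-proportional-navigation cooperative command, the time-to-go dynamics reduce
to `t_go' = −1 + (−α + β h'/h) s`. -/
theorem tgoTPN_closed_loop
    (VT γT c : ℝ) (α β te : ℝ) (hte : 0 < te)
    (s : ℝ → ℝ) (I : Set ℝ) (hI : I ⊆ Set.Ioo 0 te)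
    (r θ γP VP a θd : ℝ → ℝ)
    (hr : ∀ t ∈ I, HasDerivAt r (VradT VT γT θ γP VP t) t)
    (hθ : ∀ t ∈ I, HasDerivAt θ (θd t) t)
    (hθd : ∀ t ∈ I, r t * θd t = VlosT VT γT θ γP VP t)
    (hγ : ∀ t ∈ I, HasDerivAt γP (a t * Real.cos (devAngle θ γP t) / VP t) t)
    (hVPd : ∀ t ∈ I, HasDerivAt VP (a t * Real.sin (devAngle θ γP t)) t)
    (hrpos : ∀ t ∈ I, 0 < r t)
    (hVPne : ∀ t ∈ I, VP t ≠ 0)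
    (hVθ : ∀ t ∈ I, VlosT VT γT θ γP VP t ≠ 0)
    (hVr2c : ∀ t ∈ I, VradT VT γT θ γP VP t + 2 * c ≠ 0)
    (hQ : ∀ t ∈ I, Qtpn VT γT c θ γP VP t ≠ 0)
    (hcmd : ∀ t ∈ I,
      a t = c * θd t
        + (Qtpn VT γT c θ γP VP t ^ 2
            / (2 * (VradT VT γT θ γP VP t + 2 * c) * VlosT VT γT θ γP VP t * r t))
          * (α - β * ((Real.cos (Real.pi * t / te) + 1) / scalingFn te t)) * s t) :
    ∀ t ∈ I, HasDerivAt (tgoTPN VT γT c r θ γP VP)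
      (-1 + (-α + β * ((Real.cos (Real.pi * t / te) + 1) / scalingFn te t)) * s t) t := by
  intro t ht
  have hrne := (hrpos t ht).ne'
  have hVPn := hVPne t ht
  have hVθn := hVθ t ht
  have hVr2cn := hVr2c t ht
  have hQn := hQ t ht
  simp only [VradT, VlosT, devAngle, Qtpn, tgoTPN] at hr hθd hVθn hVr2cn hQn hcmd ⊢
  have hδ : HasDerivAt (fun u => γP u - θ u)
      (a t * Real.cos (devAngle θ γP t) / VP t - θd t) t := (hγ t ht).sub (hθ t ht)
  simp only [devAngle] at hδ
  have hVrD : HasDerivAt (fun u => VT * Real.cos (γT - θ u) - VP u * Real.cos (γP u - θ u))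
      (θd t * (VT * Real.sin (γT - θ t) - VP t * Real.sin (γP t - θ t))) t := by
    have h1 := (((hθ t ht).const_sub γT).cos).const_mul VT
    have h2 := (hVPd t ht).mul hδ.cos
    simp only [devAngle] at h2
    refine (h1.sub h2).congr_deriv ?_
    field_simp
    ring
  have hVθD : HasDerivAt (fun u => VT * Real.sin (γT - θ u) - VP u * Real.sin (γP u - θ u))
      (-(θd t) * (VT * Real.cos (γT - θ t) - VP t * Real.cos (γP t - θ t)) - a t) t := by
    have h1 := (((hθ t ht).const_sub γT).sin).const_mul VT
    have h2 := (hVPd t ht).mul hδ.sin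
    simp only [devAngle] at h2
    refine (h1.sub h2).congr_deriv ?_
    have hpy := Real.sin_sq_add_cos_sq (γP t - θ t)
    field_simp
    linear_combination (-(a t)) * hpy
  have hQD := ((hVθD.pow 2).add (hVrD.pow 2)).add (hVrD.const_mul (2 * c))
  have hND := ((hr t ht).mul (hVrD.add_const (2 * c))).neg
  have hT := hND.div hQD hQn
  refine hT.congr_deriv ?_
  simp only [Pi.add_apply, Pi.pow_apply, Pi.neg_apply, Pi.mul_apply]
  have h5 : θd t = (VT * Real.sin (γT - θ t) - VP t * Real.sin (γP t - θ t)) / r t := by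
    rw [eq_div_iff hrne]; linarith [hθd t ht]
  rw [hcmd t ht, h5]
  have hneg : (-α + β * ((Real.cos (Real.pi * t / te) + 1) / scalingFn te t))
      = -(α - β * ((Real.cos (Real.pi * t / te) + 1) / scalingFn te t)) := by ring
  rw [hneg]
  set e := α - β * ((Real.cos (Real.pi * t / te) + 1) / scalingFn te t) with he
  set X := VT * Real.sin (γT - θ t) - VP t * Real.sin (γP t - θ t) with hX
  set Y := VT * Real.cos (γT - θ t) - VP t * Real.cos (γP t - θ t) with hY
  clear_value e X Y
  rw [div_eq_iff (pow_ne_zero 2 hQn)]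
  field_simp
  ring
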